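/- Let M be an m-dimensional C^1 manifold and Φ a point-separating collection of complex-valued C^1 functions on an open connected subset Ω of M. Suppose that at no point of Ω do the differentials of the real and imaginary parts of the functions in Φ span the real cotangent space of M. Let k be the maximal dimension over points y ∈ Ω of the real span of the differentials at y of real and imaginary parts of functions in Φ, and let y be a point where this maximum is attained. Then there exist functions g_1, ..., g_k in Φ and a neighborhood of y on which the common level set of g_1, ..., g_k through y is a C^1 submanifold of positive dimension on which every function in Φ is constant; in particular Φ fails to separate points near y (a contradiction), so in fact the differentials of the real and imaginary parts of functions in Φ must span the cotangent space at some point of Ω. -/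

import Mathlib

open Set Submodule Module Metric
open scoped Manifold Topology

noncomputable section

variable {m : ℕ}

local notation "Em" => EuclideanSpace ℝ (Fin m)


/-- Surjectivity of the "evaluation" map attached to linearly independent functionals. -/
theorem aux_surj {k : ℕ} {ℓ : Fin k → Module.Dual ℝ Em}
    (hind : LinearIndependent ℝ ℓ) :
    Function.Surjective (LinearMap.pi ℓ : Em →ₗ[ℝ] (Fin k → ℝ)) := by
  rw [← LinearMap.range_eq_top]
  by_contra hne
  obtain ⟨ξ, hξ0, hξ⟩ := Submodule.exists_dual_map_eq_bot_of_lt_top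
    (lt_top_iff_ne_top.2 hne) inferInstance
  have hxv : ∀ x : Em, ξ (LinearMap.pi ℓ x) = 0 := by
    intro x
    have : ξ (LinearMap.pi ℓ x) ∈ (LinearMap.range (LinearMap.pi ℓ)).map ξ :=
      ⟨LinearMap.pi ℓ x, LinearMap.mem_range_self _ x, rfl⟩
    rw [hξ] at this
    simpa using this
  have hξw : ∀ w : Fin k → ℝ, ξ w = ∑ i, w i * ξ (Pi.single i 1) := by
    intro w
    conv_lhs => rw [pi_eq_sum_univ w]
    rw [map_sum]
    congr 1; ext i
    rw [map_smul]; simp only [smul_eq_mul]; congr 1; congr 1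
    ext j; by_cases h : i = j <;> simp [Pi.single, Function.update, h, eq_comm]
  have hc : ∀ i, ξ (Pi.single i 1) = 0 := by
    have := Fintype.linearIndependent_iff.1 hind (fun i => ξ (Pi.single i 1)) ?_
    · exact this
    · ext x
      simp only [LinearMap.coe_sum, Finset.sum_apply, LinearMap.smul_apply,
        LinearMap.zero_apply, smul_eq_mul]
      have := hxv x
      rw [hξw] at this
      simpa [LinearMap.pi_apply, mul_comm] using this
  apply hξ0
  apply LinearMap.ext
  intro w
  rw [hξw]
  simp [hc]

set_option maxHeartbeats 1000000 in
theorem core {k : ℕ} (hkm : k < m) {V : Set Em}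
    (hV : IsOpen V) {p0 : Em} (hp0 : p0 ∈ V)
    (G : Set (Em → ℝ))
    (hG : ∀ g ∈ G, ContDiffOn ℝ 1 g V)
    (hle : ∀ p ∈ V, finrank ℝ
      (span ℝ ((fun g => (fderiv ℝ g p).toLinearMap) '' G)) ≤ k)
    (hge : k ≤ finrank ℝ
      (span ℝ ((fun g => (fderiv ℝ g p0).toLinearMap) '' G))) :
    ∃ p1 ∈ V, ∃ p2 ∈ V, p1 ≠ p2 ∧ ∀ g ∈ G, g p1 = g p2 := by
  classical
  set d : (Em → ℝ) → Em → Module.Dual ℝ Em :=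
    fun g p => (fderiv ℝ g p).toLinearMap with hd
  set T : Em → Set (Module.Dual ℝ Em) := fun p => (fun g => d g p) '' G with hT
  -- differentiability
  have hdiff : ∀ g ∈ G, ∀ p ∈ V, DifferentiableAt ℝ g p := fun g hg p hp =>
    (((hG g hg).differentiableOn one_ne_zero).differentiableAt (hV.mem_nhds hp))
  -- pick an independent spanning family at p0
  obtain ⟨t, hts, hspan, hind⟩ := exists_linearIndependent ℝ (T p0)
  have htfin : t.Finite := hind.setFinite
  haveI := htfin.fintype
  have hcardk : Fintype.card t = k := by
    have h1 : finrank ℝ (span ℝ t) = t.toFinset.card := finrank_span_set_eq_card hind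
    have h2 : finrank ℝ (span ℝ t) = finrank ℝ (span ℝ (T p0)) := by rw [hspan]
    have h3 : finrank ℝ (span ℝ (T p0)) = k :=
      le_antisymm (hle p0 hp0) hge
    rw [← Set.toFinset_card, ← h1, h2, h3]
  let e : Fin k ≃ t := (Fintype.equivFinOfCardEq hcardk).symm
  set ℓ : Fin k → Module.Dual ℝ Em := fun i => (e i : Module.Dual ℝ Em) with hℓ
  have hℓind : LinearIndependent ℝ ℓ := hind.comp e e.injective
  have hℓmem : ∀ i, ℓ i ∈ T p0 := fun i => hts (e i).2
  -- choose functions realizing the functionals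
  have hchoice : ∀ i : Fin k, ∃ g, g ∈ G ∧ d g p0 = ℓ i := by
    intro i
    obtain ⟨g, hg, hgd⟩ := hℓmem i
    exact ⟨g, hg, hgd⟩
  choose gf hgf hgd using hchoice
  -- dual vectors
  have hLsurj : Function.Surjective (LinearMap.pi ℓ : Em →ₗ[ℝ] (Fin k → ℝ)) :=
    aux_surj hℓind
  have hv : ∀ j : Fin k, ∃ v : Em, ∀ i, ℓ i v = if i = j then 1 else 0 := by
    intro j
    obtain ⟨v, hv⟩ := hLsurj (Pi.single j 1)
    refine ⟨v, fun i => ?_⟩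
    have := congrFun hv i
    simp only [LinearMap.pi_apply] at this
    rw [this]
    by_cases h : i = j <;> simp [Pi.single, Function.update, h, eq_comm]
  choose v hvd using hv
  -- the matrix of derivatives
  set Mat : Em → Matrix (Fin k) (Fin k) ℝ :=
    fun p => Matrix.of fun i j => fderiv ℝ (gf i) p (v j) with hMat
  have hMat0 : Mat p0 = 1 := by
    ext i j
    have : fderiv ℝ (gf i) p0 (v j) = ℓ i (v j) := by rw [← hgd i]; rfl
    simp only [hMat, Matrix.of_apply, this, hvd i j, Matrix.one_apply]
    split <;> simp_all
  have hfc : ∀ i : Fin k, ContinuousOn (fun p => fderiv ℝ (gf i) p) V := fun i =>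
    ((hG _ (hgf i)).continuousOn_fderiv_of_isOpen hV le_rfl)
  have hMatcont : ContinuousOn (fun p => (Mat p).det) V := by
    refine (Continuous.matrix_det continuous_id).comp_continuousOn ?_
    apply continuousOn_pi.2; intro i
    apply continuousOn_pi.2; intro j
    exact (hfc i).clm_apply continuousOn_const
  set V' : Set Em := V ∩ (fun p => (Mat p).det) ⁻¹' {(0:ℝ)}ᶜ with hV'def
  have hV' : IsOpen V' := hMatcont.isOpen_inter_preimage hV isOpen_compl_singleton
  have hp0' : p0 ∈ V' := by
    refine ⟨hp0, ?_⟩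
    simp [hMat0]
  -- linear independence on V'
  have hindp : ∀ p ∈ V', LinearIndependent ℝ (fun i => d (gf i) p) := by
    intro p hp
    rw [Fintype.linearIndependent_iff]
    intro c hc
    have hdet : IsUnit (Mat p).det := isUnit_iff_ne_zero.2 hp.2
    have hvm : Matrix.vecMul c (Mat p) = 0 := by
      ext j
      have := LinearMap.congr_fun hc (v j)
      simp only [LinearMap.coe_sum, Finset.sum_apply, LinearMap.smul_apply,
        LinearMap.zero_apply, smul_eq_mul] at this
      simpa [Matrix.vecMul, dotProduct, hMat, hd] using this
    have := congrArg (fun w => Matrix.vecMul w (Mat p)⁻¹) hvm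
    simpa [Matrix.vecMul_vecMul, Matrix.mul_nonsing_inv _ hdet,
      Matrix.zero_vecMul, Matrix.vecMul_one, funext_iff] using this
  -- span property on V'
  have hspanp : ∀ p ∈ V', ∀ g ∈ G,
      d g p ∈ span ℝ (Set.range fun i => d (gf i) p) := by
    intro p hp g hg
    have hle1 : span ℝ (Set.range fun i => d (gf i) p) ≤ span ℝ (T p) := by
      apply span_mono
      rintro - ⟨i, rfl⟩
      exact ⟨gf i, hgf i, rfl⟩
    have hfr1 : finrank ℝ (span ℝ (Set.range fun i => d (gf i) p)) = k := by
      rw [finrank_span_eq_card (hindp p hp)]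
      simp
    have heq2 : span ℝ (Set.range fun i => d (gf i) p) = span ℝ (T p) :=
      Submodule.eq_of_le_of_finrank_le hle1 (by rw [hfr1]; exact hle p hp.1)
    rw [heq2]
    exact subset_span ⟨g, hg, rfl⟩
  -- the map U and its derivative
  set U : Em → (Fin k → ℝ) := fun p i => gf i p with hUdef
  set DU : Em → (Em →L[ℝ] (Fin k → ℝ)) :=
    fun p => ContinuousLinearMap.pi (fun i => fderiv ℝ (gf i) p) with hDU
  have hUf : ∀ p ∈ V, HasFDerivAt U (DU p) p := fun p hp =>
    hasFDerivAt_pi.2 fun i => (hdiff _ (hgf i) p hp).hasFDerivAt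
  have hUc : ContDiffOn ℝ 1 U V := contDiffOn_pi.2 fun i => hG _ (hgf i)
  set K : Submodule ℝ Em := LinearMap.ker (DU p0 : Em →ₗ[ℝ] (Fin k → ℝ)) with hK
  haveI : CompleteSpace K := FiniteDimensional.complete ℝ K
  set projK : Em →L[ℝ] K := orthogonalProjection K with hprojK
  set Ψ : Em → (Fin k → ℝ) × K := fun p => (U p, projK (p - p0)) with hΨdef
  set DΨ : Em →L[ℝ] (Fin k → ℝ) × K := (DU p0).prod projK with hDΨ
  have hΨd : HasFDerivAt Ψ DΨ p0 := by
    apply (hUf p0 hp0).prodMk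
    have h : HasFDerivAt (fun x => projK (x - p0))
        (projK.comp (ContinuousLinearMap.id ℝ Em)) p0 :=
      projK.hasFDerivAt.comp p0 ((hasFDerivAt_id p0).sub_const p0)
    rwa [ContinuousLinearMap.comp_id] at h
  -- surjectivity of DU p0
  have hDUL : ∀ x : Em, DU p0 x = LinearMap.pi ℓ x := by
    intro x
    ext i
    simp only [ContinuousLinearMap.pi_apply, LinearMap.pi_apply]
    rw [← hgd i]
    rfl
  have hsurj : Function.Surjective (DU p0) := by
    intro w
    obtain ⟨x, hx⟩ := aux_surj hℓind w
    exact ⟨x, by rw [hDUL x, hx]⟩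
  -- dimension count
  have hEfr : finrank ℝ Em = m := finrank_euclideanSpace_fin
  have hKfr : finrank ℝ K = m - k := by
    have h1 := LinearMap.finrank_range_add_finrank_ker (DU p0 : Em →ₗ[ℝ] (Fin k → ℝ))
    have h2 : LinearMap.range (DU p0 : Em →ₗ[ℝ] (Fin k → ℝ)) = ⊤ :=
      LinearMap.range_eq_top.2 (by exact hsurj)
    have h4 : LinearMap.ker (DU p0 : Em →ₗ[ℝ] (Fin k → ℝ)) = K := rfl
    rw [h2, finrank_top, h4, hEfr] at h1
    rw [show finrank ℝ (Fin k → ℝ) = k from Module.finrank_fin_fun ℝ] at h1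
    omega
  -- DΨ is a bijection
  have hinj : Function.Injective DΨ := by
    have : ∀ x : Em, DΨ x = 0 → x = 0 := by
      intro x hx
      have h1 : DU p0 x = 0 := congrArg Prod.fst hx
      have h2 : projK x = 0 := congrArg Prod.snd hx
      have hxK : x ∈ K := h1
      have := orthogonalProjection_mem_subspace_eq_self (⟨x, hxK⟩ : K)
      rw [show ((⟨x, hxK⟩ : K) : Em) = x from rfl] at this
      have : (⟨x, hxK⟩ : K) = 0 := by rw [← this]; exact h2
      simpa using congrArg (Subtype.val) this
    intro a b hab
    have := this (a - b) (by rw [map_sub, hab, sub_self])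
    exact sub_eq_zero.1 this
  have hfrprod : finrank ℝ ((Fin k → ℝ) × K) = finrank ℝ Em := by
    rw [Module.finrank_prod, Module.finrank_fin_fun, hKfr, hEfr]
    omega
  have hbij : Function.Bijective (DΨ.toLinearMap) :=
    ⟨hinj, (LinearMap.injective_iff_surjective_of_finrank_eq_finrank hfrprod.symm).1 hinj⟩
  set eqv : Em ≃L[ℝ] ((Fin k → ℝ) × K) :=
    (LinearEquiv.ofBijective DΨ.toLinearMap hbij).toContinuousLinearEquiv with heqv
  have hcoe : (eqv : Em →L[ℝ] ((Fin k → ℝ) × K)) = DΨ :=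
    ContinuousLinearMap.ext fun x => rfl
  have hΨc : ContDiffAt ℝ 1 Ψ p0 := by
    apply ContDiffAt.prodMk
    · exact hUc.contDiffAt (hV.mem_nhds hp0)
    · exact (projK.contDiff.comp (contDiff_id.sub contDiff_const)).contDiffAt
  have hf' : HasFDerivAt Ψ (eqv : Em →L[ℝ] ((Fin k → ℝ) × K)) p0 := by
    rw [hcoe]; exact hΨd
  -- local inverse
  set ζ : ((Fin k → ℝ) × K) → Em := hΨc.localInverse hf' one_ne_zero with hζ
  have hζ0 : ζ (Ψ p0) = p0 := hΨc.localInverse_apply_image hf' one_ne_zero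
  have hζC : ContDiffAt ℝ 1 ζ (Ψ p0) := hΨc.to_localInverse hf' one_ne_zero
  have hright : ∀ᶠ q in 𝓝 (Ψ p0), Ψ (ζ q) = q :=
    (hΨc.hasStrictFDerivAt' hf' one_ne_zero).eventually_right_inverse
  obtain ⟨W, hWnhds, hζW⟩ := hζC.contDiffOn le_rfl (by norm_num)
  have hζV' : ∀ᶠ q in 𝓝 (Ψ p0), ζ q ∈ V' := by
    have : ContinuousAt ζ (Ψ p0) := hζC.continuousAt
    have := this.preimage_mem_nhds (hV'.mem_nhds (by rw [hζ0]; exact hp0'))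
    exact this
  -- the parametrization of the level set
  set ι : K → ((Fin k → ℝ) × K) := fun c => (U p0, c) with hι
  have hΨp0 : Ψ p0 = (U p0, 0) := by
    simp only [hΨdef, sub_self, map_zero]
  have hι0 : ι 0 = Ψ p0 := by rw [hΨp0]
  have hιcont : Continuous ι := continuous_const.prodMk continuous_id
  have hWev : ∀ᶠ q in 𝓝 (Ψ p0), q ∈ W := hWnhds
  have hAll : ∀ᶠ q in 𝓝 (Ψ p0), Ψ (ζ q) = q ∧ ζ q ∈ V' ∧ q ∈ W :=
    hright.and (hζV'.and hWev)
  have hD0 : {c : K | Ψ (ζ (ι c)) = ι c ∧ ζ (ι c) ∈ V' ∧ ι c ∈ W} ∈ 𝓝 (0 : K) := by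
    have h := hιcont.continuousAt (x := (0 : K))
    rw [ContinuousAt, hι0] at h
    exact h hAll
  obtain ⟨ε, hε, hball⟩ := Metric.mem_nhds_iff.1 hD0
  set D : Set K := ball (0 : K) ε with hDdef
  set γ : K → Em := fun c => ζ (ι c) with hγ
  have hprop : ∀ c ∈ D, Ψ (γ c) = ι c ∧ γ c ∈ V' ∧ ι c ∈ W := fun c hc => hball hc
  have hγ0 : γ 0 = p0 := by rw [hγ]; simp only [hι0]; exact hζ0
  have hγC : ContDiffOn ℝ 1 γ D :=
    hζW.comp ((contDiff_const.prodMk contDiff_id).contDiffOn)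
      (fun c hc => (hprop c hc).2.2)
  have hγdiff : ∀ c ∈ D, DifferentiableAt ℝ γ c := fun c hc =>
    ((hγC.differentiableOn one_ne_zero).differentiableAt (isOpen_ball.mem_nhds hc))
  -- key : each g ∈ G has zero derivative along γ
  have hkey : ∀ g ∈ G, ∀ c ∈ D, HasFDerivAt (fun c' => g (γ c')) (0 : K →L[ℝ] ℝ) c := by
    intro g hg c hc
    have hq2 : γ c ∈ V' := (hprop c hc).2.1
    have hγd := (hγdiff c hc).hasFDerivAt
    set Dγ : K →L[ℝ] Em := fderiv ℝ γ c with hDγ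
    have hUloc : (fun c' => U (γ c')) =ᶠ[𝓝 c] fun _ => U p0 := by
      filter_upwards [isOpen_ball.mem_nhds hc] with c' hc'
      exact congrArg Prod.fst (hprop c' hc').1
    have hUcomp : HasFDerivAt (fun c' => U (γ c')) ((DU (γ c)).comp Dγ) c :=
      (hUf (γ c) hq2.1).comp c hγd
    have h1 : HasFDerivAt (fun c' => U (γ c')) (0 : K →L[ℝ] (Fin k → ℝ)) c :=
      (hasFDerivAt_const (U p0) c).congr_of_eventuallyEq hUloc
    have hzero : (DU (γ c)).comp Dγ = 0 := hUcomp.unique h1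
    have h0 : ∀ w, DU (γ c) (Dγ w) = 0 := by
      intro w
      rw [← ContinuousLinearMap.comp_apply, hzero]
      rfl
    obtain ⟨cf, hcf⟩ := mem_span_range_iff_exists_fun ℝ |>.1 (hspanp (γ c) hq2 g hg)
    have hgz : ∀ w, fderiv ℝ g (γ c) (Dγ w) = 0 := by
      intro w
      have h2 := DFunLike.congr_fun hcf (Dγ w)
      simp only [LinearMap.coe_sum, Finset.sum_apply, LinearMap.smul_apply,
        smul_eq_mul] at h2
      have h3 : ∀ i : Fin k, d (gf i) (γ c) (Dγ w) = 0 := by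
        intro i
        have := congrFun (h0 w) i
        simpa [hd, hDU] using this
      have h4 : (d g (γ c)) (Dγ w) = fderiv ℝ g (γ c) (Dγ w) := rfl
      rw [← h4, ← h2]
      apply Finset.sum_eq_zero
      intro i _
      rw [h3 i, mul_zero]
    have hchain : HasFDerivAt (fun c' => g (γ c'))
        ((fderiv ℝ g (γ c)).comp Dγ) c :=
      ((hdiff g hg (γ c) hq2.1).hasFDerivAt).comp c hγd
    have hfin : (fderiv ℝ g (γ c)).comp Dγ = 0 :=
      ContinuousLinearMap.ext fun w => hgz w
    rwa [hfin] at hchain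
  -- constancy along γ on D
  have hconst : ∀ g ∈ G, ∀ c ∈ D, g (γ c) = g (γ 0) := by
    intro g hg c hc
    have hdo : DifferentiableOn ℝ (fun c' => g (γ c')) D := fun c' hc' =>
      (hkey g hg c' hc').differentiableAt.differentiableWithinAt
    have hfz : ∀ c' ∈ D, fderivWithin ℝ (fun c' => g (γ c')) D c' = 0 := fun c' hc' =>
      (hkey g hg c' hc').hasFDerivWithinAt.fderivWithin (isOpen_ball.uniqueDiffWithinAt hc')
    exact (convex_ball (0:K) ε).is_const_of_fderivWithin_eq_zero hdo hfz hc
      (mem_ball_self hε)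
  -- pick a nonzero small element of K
  have hKnt : Nontrivial K := Module.nontrivial_of_finrank_pos (R := ℝ)
    (by rw [hKfr]; omega)
  obtain ⟨c0, hc0⟩ := exists_ne (0 : K)
  have hc0n : (0:ℝ) < ‖c0‖ := norm_pos_iff.2 hc0
  set c1 : K := (ε / (2 * ‖c0‖)) • c0 with hc1
  have hc1pos : (0:ℝ) < ε / (2 * ‖c0‖) := by positivity
  have hc1norm : ‖c1‖ = ε / 2 := by
    rw [hc1, norm_smul, Real.norm_eq_abs, abs_of_pos hc1pos]
    rw [div_mul_eq_mul_div, mul_comm (2:ℝ) ‖c0‖, ← div_div, mul_div_assoc,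
      div_self (ne_of_gt hc0n), mul_one]
  have hc1D : c1 ∈ D := by
    rw [hDdef, mem_ball, dist_zero_right, hc1norm]
    linarith
  have hc1ne : c1 ≠ 0 := smul_ne_zero (ne_of_gt hc1pos) hc0
  have h0D : (0 : K) ∈ D := mem_ball_self hε
  refine ⟨γ c1, (hprop c1 hc1D).2.1.1, p0, hp0, ?_, ?_⟩
  · intro hcon
    have hps : projK (γ c1 - p0) = c1 := congrArg Prod.snd (hprop c1 hc1D).1
    rw [hcon, sub_self, map_zero] at hps
    exact hc1ne hps.symm
  · intro g hg
    have := hconst g hg c1 hc1D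
    rw [hγ0] at this
    exact this




section Glue

variable {M : Type*} [TopologicalSpace M]
  [ChartedSpace (EuclideanSpace ℝ (Fin m)) M]
  [HasGroupoid M (contDiffGroupoid 1 (𝓡 m))]


theorem mdiff_atlas_c1 {e : OpenPartialHomeomorph M Em}
    (h : e ∈ atlas Em M) {x : M} (hx : x ∈ e.source) :
    MDifferentiableAt (𝓡 m) (𝓡 m) e x := by
  rw [mdifferentiableAt_iff]
  refine ⟨(e.continuousOn x hx).continuousAt (e.open_source.mem_nhds hx), ?_⟩
  have mem : (𝓡 m) ((chartAt Em x : M → Em) x) ∈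
      (𝓡 m).symm ⁻¹' ((chartAt Em x).symm ≫ₕ e).source ∩ Set.range (𝓡 m) := by
    simp only [hx, mfld_simps]
  have hcompat : (chartAt Em x).symm.trans e ∈ contDiffGroupoid 1 (𝓡 m) :=
    HasGroupoid.compatible (chart_mem_atlas Em x) h
  have A : ContDiffOn ℝ 1 ((𝓡 m) ∘ (chartAt Em x).symm.trans e ∘ (𝓡 m).symm)
      ((𝓡 m).symm ⁻¹' ((chartAt Em x).symm.trans e).source ∩ Set.range (𝓡 m)) :=
    hcompat.1
  have B := A.differentiableOn one_ne_zero ((𝓡 m) ((chartAt Em x : M → Em) x)) mem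
  simp only [mfld_simps] at B
  have hopen : IsOpen ((chartAt Em x).target ∩ (chartAt Em x).symm ⁻¹' e.source) :=
    (chartAt Em x).symm.isOpen_inter_preimage e.open_source
  have hmem : (chartAt Em x) x ∈
      (chartAt Em x).target ∩ (chartAt Em x).symm ⁻¹' e.source := by
    simp only [hx, mfld_simps]
  have hpre : (chartAt Em x).target ∩ (chartAt Em x).symm ⁻¹' e.source
      ∈ 𝓝 ((chartAt Em x) x) := hopen.mem_nhds hmem
  simp only [mfld_simps]
  exact (B.differentiableAt hpre).differentiableWithinAt

theorem mdiff_atlas_symm_c1 {e : OpenPartialHomeomorph M Em}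
    (h : e ∈ atlas Em M) {x : Em} (hx : x ∈ e.target) :
    MDifferentiableAt (𝓡 m) (𝓡 m) e.symm x := by
  rw [mdifferentiableAt_iff]
  refine ⟨(e.continuousOn_symm x hx).continuousAt (e.open_target.mem_nhds hx), ?_⟩
  have mem : (𝓡 m) x ∈
      (𝓡 m).symm ⁻¹' (e.symm ≫ₕ chartAt Em (e.symm x)).source ∩ Set.range (𝓡 m) := by
    simp only [hx, mfld_simps]
  have hcompat : e.symm.trans (chartAt Em (e.symm x)) ∈ contDiffGroupoid 1 (𝓡 m) :=
    HasGroupoid.compatible h (chart_mem_atlas Em _)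
  have A : ContDiffOn ℝ 1 ((𝓡 m) ∘ e.symm.trans (chartAt Em (e.symm x)) ∘ (𝓡 m).symm)
      ((𝓡 m).symm ⁻¹' (e.symm.trans (chartAt Em (e.symm x))).source ∩ Set.range (𝓡 m)) :=
    hcompat.1
  have B := A.differentiableOn one_ne_zero ((𝓡 m) x) mem
  simp only [mfld_simps] at B
  have hopen : IsOpen (e.target ∩ e.symm ⁻¹' (chartAt Em (e.symm x)).source) :=
    e.symm.isOpen_inter_preimage (chartAt Em (e.symm x)).open_source
  have hmem : x ∈ e.target ∩ e.symm ⁻¹' (chartAt Em (e.symm x)).source := by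
    simp only [hx, mfld_simps]
  have hpre : e.target ∩ e.symm ⁻¹' (chartAt Em (e.symm x)).source ∈ 𝓝 x :=
    hopen.mem_nhds hmem
  simp only [mfld_simps]
  exact (B.differentiableAt hpre).differentiableWithinAt

theorem chart_mdiff_c1 (y : M) :
    (chartAt Em y).MDifferentiable (𝓡 m) (𝓡 m) :=
  ⟨fun _ hx => (mdiff_atlas_c1 (chart_mem_atlas Em y) hx).mdifferentiableWithinAt,
   fun _ hx => (mdiff_atlas_symm_c1 (chart_mem_atlas Em y) hx).mdifferentiableWithinAt⟩

theorem chartrep_contDiffOn {Ω : Set M} (hΩ : IsOpen Ω) {f : M → ℂ}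
    (hf : ContMDiffOn (𝓡 m) 𝓘(ℝ, ℂ) 1 f Ω) (y : M) :
    ContDiffOn ℝ 1 (f ∘ (chartAt Em y).symm)
      ((chartAt Em y).target ∩ (chartAt Em y).symm ⁻¹' Ω) := by
  set φ := chartAt Em y with hφ
  intro p hp
  set x' := φ.symm p with hx'def
  have hx'Ω : x' ∈ Ω := hp.2
  set χ := chartAt Em x' with hχ
  have h1 := hf x' hx'Ω
  rw [contMDiffWithinAt_iff] at h1
  have h2 := h1.2
  simp only [mfld_simps] at h2
  -- h2 : ContDiffWithinAt ℝ 1 (f ∘ χ.symm) (χ.symm ⁻¹' Ω) (χ x')  (roughly)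
  have hcompat : φ.symm ≫ₕ χ ∈ contDiffGroupoid 1 (𝓡 m) :=
    HasGroupoid.compatible (chart_mem_atlas Em y) (chart_mem_atlas Em x')
  have htrans : ContDiffOn ℝ 1 (χ ∘ φ.symm) (φ.target ∩ φ.symm ⁻¹' χ.source) := by
    have hA := hcompat.1
    simp only [contDiffPregroupoid, mfld_simps] at hA
    exact hA
  have hopen2 : IsOpen (φ.target ∩ φ.symm ⁻¹' χ.source) :=
    φ.symm.isOpen_inter_preimage χ.open_source
  have hp2 : p ∈ φ.target ∩ φ.symm ⁻¹' χ.source :=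
    ⟨hp.1, by rw [mem_preimage]; exact mem_chart_source Em x'⟩
  have htransp : ContDiffWithinAt ℝ 1 (χ ∘ φ.symm)
      ((φ.target ∩ φ.symm ⁻¹' Ω) ∩ (φ.target ∩ φ.symm ⁻¹' χ.source)) p :=
    (htrans p hp2).mono inter_subset_right
  have hsub : (φ.target ∩ φ.symm ⁻¹' Ω) ∩ (φ.target ∩ φ.symm ⁻¹' χ.source) ⊆
      (χ ∘ φ.symm) ⁻¹' (χ.symm ⁻¹' Ω) := by
    rintro q ⟨⟨hq1, hq2⟩, ⟨-, hq3⟩⟩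
    simp only [mem_preimage, Function.comp_apply]
    rw [χ.left_inv hq3]
    exact hq2
  have hx'χ : (χ ∘ φ.symm) p = χ x' := rfl
  have hcomp : ContDiffWithinAt ℝ 1 ((f ∘ χ.symm) ∘ (χ ∘ φ.symm))
      ((φ.target ∩ φ.symm ⁻¹' Ω) ∩ (φ.target ∩ φ.symm ⁻¹' χ.source)) p :=
    ContDiffWithinAt.comp p (hx'χ ▸ h2) htransp hsub
  have hcongr : ContDiffWithinAt ℝ 1 (f ∘ φ.symm)
      ((φ.target ∩ φ.symm ⁻¹' Ω) ∩ (φ.target ∩ φ.symm ⁻¹' χ.source)) p := by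
    apply hcomp.congr
    · rintro q ⟨⟨-, -⟩, ⟨-, hq3⟩⟩
      simp only [Function.comp_apply]
      rw [χ.left_inv hq3]
    · simp only [Function.comp_apply]
      rw [χ.left_inv (mem_chart_source Em x')]
  rw [← contDiffWithinAt_inter (hopen2.mem_nhds hp2)]
  exact hcongr

theorem fderiv_re_comp {F : EuclideanSpace ℝ (Fin m) → ℂ} {p : EuclideanSpace ℝ (Fin m)}
    (h : DifferentiableAt ℝ F p) :
    fderiv ℝ (fun q => (F q).re) p = Complex.reCLM.comp (fderiv ℝ F p) :=
  (Complex.reCLM.hasFDerivAt.comp p h.hasFDerivAt).fderiv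

theorem fderiv_im_comp {F : EuclideanSpace ℝ (Fin m) → ℂ} {p : EuclideanSpace ℝ (Fin m)}
    (h : DifferentiableAt ℝ F p) :
    fderiv ℝ (fun q => (F q).im) p = Complex.imCLM.comp (fderiv ℝ F p) :=
  (Complex.imCLM.hasFDerivAt.comp p h.hasFDerivAt).fderiv

theorem mfderiv_chart_rep {Ω : Set M} (hΩ : IsOpen Ω) {f : M → ℂ}
    (hf : ContMDiffOn (𝓡 m) 𝓘(ℝ, ℂ) 1 f Ω) {y : M} {x' : M}
    (hx' : x' ∈ (chartAt Em y).source) (hx'Ω : x' ∈ Ω) :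
    mfderiv (𝓡 m) 𝓘(ℝ, ℂ) f x' =
      (fderiv ℝ (f ∘ (chartAt Em y).symm) ((chartAt Em y) x')).comp
        (mfderiv (𝓡 m) (𝓡 m) (chartAt Em y) x') := by
  set φ := chartAt Em y with hφ
  have hVopen : IsOpen (φ.target ∩ φ.symm ⁻¹' Ω) := φ.symm.isOpen_inter_preimage hΩ
  have hpV : φ x' ∈ φ.target ∩ φ.symm ⁻¹' Ω := by
    refine ⟨φ.map_source hx', ?_⟩
    rw [mem_preimage, φ.left_inv hx']
    exact hx'Ω
  have hdF : DifferentiableAt ℝ (f ∘ φ.symm) (φ x') :=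
    (((chartrep_contDiffOn hΩ hf y).differentiableOn one_ne_zero).differentiableAt
      (hVopen.mem_nhds hpV))
  have hreq : f =ᶠ[𝓝 x'] (f ∘ φ.symm) ∘ φ := by
    filter_upwards [φ.open_source.mem_nhds hx'] with z hz
    simp only [Function.comp_apply]
    rw [φ.left_inv hz]
  have h1 : MDifferentiableAt (𝓡 m) 𝓘(ℝ, ℂ) (f ∘ φ.symm) (φ x') :=
    mdifferentiableAt_iff_differentiableAt.2 hdF
  have h2 : MDifferentiableAt (𝓡 m) (𝓡 m) φ x' :=
    mdiff_atlas_c1 (chart_mem_atlas Em y) hx'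
  rw [hreq.mfderiv_eq, mfderiv_comp x' h1 h2, mfderiv_eq_fderiv]
  rfl

end Glue

set_option maxHeartbeats 1000000 in
theorem main_glue {M : Type*} [TopologicalSpace M] [T2Space M]
    [ChartedSpace (EuclideanSpace ℝ (Fin m)) M]
    [HasGroupoid M (contDiffGroupoid 1 (𝓡 m))]
    (Ω : Set M) (hΩ : IsOpen Ω) (hconn : IsConnected Ω)
    (Φ : Set (M → ℂ))
    (hΦ : ∀ f ∈ Φ, ContMDiffOn (𝓡 m) 𝓘(ℝ, ℂ) 1 f Ω)
    (hsep : ∀ x ∈ Ω, ∀ y ∈ Ω, x ≠ y → ∃ f ∈ Φ, f x ≠ f y) :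
    ∃ x ∈ Ω, Submodule.span ℝ
      {ℓ : Module.Dual ℝ (TangentSpace (𝓡 m) x) | ∃ f ∈ Φ,
        ℓ = (Complex.reCLM.comp (mfderiv (𝓡 m) 𝓘(ℝ, ℂ) f x)).toLinearMap ∨
        ℓ = (Complex.imCLM.comp (mfderiv (𝓡 m) 𝓘(ℝ, ℂ) f x)).toLinearMap} = ⊤ := by
  classical
  by_contra hcon
  push_neg at hcon
  haveI : ∀ x : M, FiniteDimensional ℝ (TangentSpace (𝓡 m) x) := fun _ =>
    inferInstanceAs (FiniteDimensional ℝ Em)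
  set S : (x : M) → Set (Module.Dual ℝ (TangentSpace (𝓡 m) x)) := fun x =>
    {ℓ | ∃ f ∈ Φ,
      ℓ = (Complex.reCLM.comp (mfderiv (𝓡 m) 𝓘(ℝ, ℂ) f x)).toLinearMap ∨
      ℓ = (Complex.imCLM.comp (mfderiv (𝓡 m) 𝓘(ℝ, ℂ) f x)).toLinearMap} with hSdef
  set r : M → ℕ := fun x => finrank ℝ (span ℝ (S x)) with hrdef
  have hdualfr : ∀ x : M, finrank ℝ (Module.Dual ℝ (TangentSpace (𝓡 m) x)) = m := by
    intro x
    rw [Subspace.dual_finrank_eq]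
    exact finrank_euclideanSpace_fin
  have hrle : ∀ x : M, r x ≤ m := fun x =>
    le_trans (Submodule.finrank_le _) (le_of_eq (hdualfr x))
  have hne : (r '' Ω).Nonempty := hconn.nonempty.image r
  have hbdd : BddAbove (r '' Ω) := ⟨m, by rintro - ⟨x, -, rfl⟩; exact hrle x⟩
  obtain ⟨y, hyΩ, hyk⟩ := Nat.sSup_mem hne hbdd
  set k := sSup (r '' Ω) with hkdef
  have hmax : ∀ x ∈ Ω, r x ≤ k := fun x hx => le_csSup hbdd ⟨x, hx, rfl⟩
  have hklt : k < m := by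
    have h1 : span ℝ (S y) < ⊤ := lt_top_iff_ne_top.2 (hcon y hyΩ)
    have h2 := Submodule.finrank_lt h1.ne
    rw [hdualfr y] at h2
    rw [← hyk]
    exact h2
  -- chart at y
  set φ := chartAt Em y with hφdef
  have he := chart_mdiff_c1 (m := m) (M := M) y
  set V : Set Em := φ.target ∩ φ.symm ⁻¹' Ω with hVdef
  have hVopen : IsOpen V := φ.symm.isOpen_inter_preimage hΩ
  have hyφ : y ∈ φ.source := mem_chart_source Em y
  have hp0V : φ y ∈ V := by
    refine ⟨φ.map_source hyφ, ?_⟩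
    rw [mem_preimage, φ.left_inv hyφ]
    exact hyΩ
  set G : Set (Em → ℝ) :=
    {g | ∃ f ∈ Φ, g = (fun p => ((f ∘ φ.symm) p).re) ∨
      g = (fun p => ((f ∘ φ.symm) p).im)} with hGdef
  have hGC1 : ∀ g ∈ G, ContDiffOn ℝ 1 g V := by
    rintro g ⟨f, hfΦ, (rfl | rfl)⟩
    · exact Complex.reCLM.contDiff.comp_contDiffOn (chartrep_contDiffOn hΩ (hΦ f hfΦ) y)
    · exact Complex.imCLM.contDiff.comp_contDiffOn (chartrep_contDiffOn hΩ (hΦ f hfΦ) y)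
  -- rank transfer
  have hkey : ∀ x' : M, x' ∈ Ω → x' ∈ φ.source → r x' =
      finrank ℝ (span ℝ ((fun g => (fderiv ℝ g (φ x')).toLinearMap) '' G)) := by
    intro x' hx'Ω hx'φ
    set A : TangentSpace (𝓡 m) x' ≃L[ℝ] TangentSpace (𝓡 m) (φ x') := he.mfderiv hx'φ with hA
    set Leq : Module.Dual ℝ (TangentSpace (𝓡 m) (φ x')) ≃ₗ[ℝ]
        Module.Dual ℝ (TangentSpace (𝓡 m) x') := A.toLinearEquiv.dualMap with hLeq
    have hpV : φ x' ∈ V := by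
      refine ⟨φ.map_source hx'φ, ?_⟩
      rw [mem_preimage, φ.left_inv hx'φ]
      exact hx'Ω
    have hAcoe : ∀ (L : Em →L[ℝ] ℂ) (C : ℂ →L[ℝ] ℝ),
        ((C.comp L).comp (mfderiv (𝓡 m) (𝓡 m) φ x')).toLinearMap =
          Leq (C.comp L).toLinearMap := by
      intro L C
      ext w
      rfl
    have hset : S x' = ⇑Leq '' ((fun g => (fderiv ℝ g (φ x')).toLinearMap) '' G) := by
      ext ℓ
      simp only [hSdef, hGdef, mem_setOf_eq, mem_image]
      constructor
      · rintro ⟨f, hfΦ, (rfl | rfl)⟩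
        · have hdF : DifferentiableAt ℝ (f ∘ φ.symm) (φ x') :=
            ((chartrep_contDiffOn hΩ (hΦ f hfΦ) y).differentiableOn
              one_ne_zero).differentiableAt (hVopen.mem_nhds hpV)
          refine ⟨(fderiv ℝ (fun p => ((f ∘ φ.symm) p).re) (φ x')).toLinearMap,
            ⟨fun p => ((f ∘ φ.symm) p).re, ⟨f, hfΦ, Or.inl rfl⟩, rfl⟩, ?_⟩
          rw [fderiv_re_comp hdF, ← hAcoe, mfderiv_chart_rep hΩ (hΦ f hfΦ) hx'φ hx'Ω]
          rfl
        · have hdF : DifferentiableAt ℝ (f ∘ φ.symm) (φ x') :=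
            ((chartrep_contDiffOn hΩ (hΦ f hfΦ) y).differentiableOn
              one_ne_zero).differentiableAt (hVopen.mem_nhds hpV)
          refine ⟨(fderiv ℝ (fun p => ((f ∘ φ.symm) p).im) (φ x')).toLinearMap,
            ⟨fun p => ((f ∘ φ.symm) p).im, ⟨f, hfΦ, Or.inr rfl⟩, rfl⟩, ?_⟩
          rw [fderiv_im_comp hdF, ← hAcoe, mfderiv_chart_rep hΩ (hΦ f hfΦ) hx'φ hx'Ω]
          rfl
      · rintro ⟨-, ⟨g0, ⟨f, hfΦ, (rfl | rfl)⟩, rfl⟩, rfl⟩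
        · have hdF : DifferentiableAt ℝ (f ∘ φ.symm) (φ x') :=
            ((chartrep_contDiffOn hΩ (hΦ f hfΦ) y).differentiableOn
              one_ne_zero).differentiableAt (hVopen.mem_nhds hpV)
          refine ⟨f, hfΦ, Or.inl ?_⟩
          beta_reduce
          rw [fderiv_re_comp hdF, ← hAcoe, mfderiv_chart_rep hΩ (hΦ f hfΦ) hx'φ hx'Ω]
          rfl
        · have hdF : DifferentiableAt ℝ (f ∘ φ.symm) (φ x') :=
            ((chartrep_contDiffOn hΩ (hΦ f hfΦ) y).differentiableOn
              one_ne_zero).differentiableAt (hVopen.mem_nhds hpV)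
          refine ⟨f, hfΦ, Or.inr ?_⟩
          beta_reduce
          rw [fderiv_im_comp hdF, ← hAcoe, mfderiv_chart_rep hΩ (hΦ f hfΦ) hx'φ hx'Ω]
          rfl
    calc r x' = finrank ℝ (span ℝ (S x')) := rfl
      _ = finrank ℝ (span ℝ (⇑Leq '' ((fun g => (fderiv ℝ g (φ x')).toLinearMap) '' G))) := by
          rw [hset]
      _ = finrank ℝ (Submodule.map (Leq : Module.Dual ℝ (TangentSpace (𝓡 m) (φ x')) →ₗ[ℝ]
            Module.Dual ℝ (TangentSpace (𝓡 m) x'))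
            (span ℝ ((fun g => (fderiv ℝ g (φ x')).toLinearMap) '' G))) := by
          rw [Submodule.map_span, LinearEquiv.coe_coe]
      _ = finrank ℝ (span ℝ ((fun g => (fderiv ℝ g (φ x')).toLinearMap) '' G)) :=
          LinearEquiv.finrank_map_eq Leq _
  -- apply the Euclidean core lemma
  have hle2 : ∀ p ∈ V, finrank ℝ
      (span ℝ ((fun g => (fderiv ℝ g p).toLinearMap) '' G)) ≤ k := by
    intro p hp
    have hx'Ω : φ.symm p ∈ Ω := hp.2
    have hx'φ : φ.symm p ∈ φ.source := φ.map_target hp.1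
    have h1 := hkey (φ.symm p) hx'Ω hx'φ
    rw [φ.right_inv hp.1] at h1
    rw [← h1]
    exact hmax _ hx'Ω
  have hge2 : k ≤ finrank ℝ
      (span ℝ ((fun g => (fderiv ℝ g (φ y)).toLinearMap) '' G)) := by
    rw [← hkey y hyΩ hyφ, hyk]
  obtain ⟨p1, hp1, p2, hp2, hne12, hgeq⟩ := core hklt hVopen hp0V G hGC1 hle2 hge2
  have hx1 : φ.symm p1 ∈ Ω := hp1.2
  have hx2 : φ.symm p2 ∈ Ω := hp2.2
  have hx12 : φ.symm p1 ≠ φ.symm p2 := by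
    intro h
    apply hne12
    rw [← φ.right_inv hp1.1, ← φ.right_inv hp2.1, h]
  obtain ⟨f, hfΦ, hfne⟩ := hsep _ hx1 _ hx2 hx12
  apply hfne
  have hre := hgeq _ ⟨f, hfΦ, Or.inl rfl⟩
  have him := hgeq _ ⟨f, hfΦ, Or.inr rfl⟩
  exact Complex.ext hre him

end

/-- Let `M` be an `m`-dimensional `C¹` manifold and `Φ` a
point-separating collection of complex-valued `C¹` functions on an open connected
subset `Ω` of `M`.  Then the differentials of the real and imaginary parts of the
functions in `Φ` must span the (real) cotangent space of `M` at some point of `Ω`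
(otherwise, at a point where the dimension of their span is maximal, a common level
set of finitely many functions of `Φ` would be a positive-dimensional `C¹` manifold
on which every function in `Φ` is constant, contradicting point separation). -/
theorem stmt_13 {m : ℕ} {M : Type*} [TopologicalSpace M] [T2Space M]
    [ChartedSpace (EuclideanSpace ℝ (Fin m)) M]
    [HasGroupoid M (contDiffGroupoid 1 (𝓡 m))]
    (Ω : Set M) (hΩ : IsOpen Ω) (hconn : IsConnected Ω)
    (Φ : Set (M → ℂ))
    (hΦ : ∀ f ∈ Φ, ContMDiffOn (𝓡 m) 𝓘(ℝ, ℂ) 1 f Ω)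
    (hsep : ∀ x ∈ Ω, ∀ y ∈ Ω, x ≠ y → ∃ f ∈ Φ, f x ≠ f y) :
    ∃ x ∈ Ω, Submodule.span ℝ
      {ℓ : Module.Dual ℝ (TangentSpace (𝓡 m) x) | ∃ f ∈ Φ,
        ℓ = (Complex.reCLM.comp (mfderiv (𝓡 m) 𝓘(ℝ, ℂ) f x)).toLinearMap ∨
        ℓ = (Complex.imCLM.comp (mfderiv (𝓡 m) 𝓘(ℝ, ℂ) f x)).toLinearMap} = ⊤ :=
  main_glue Ω hΩ hconn Φ hΦ hsep
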